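/- Let 0 < ρ ≤ 1 and let (b^j)_{j≥1} be a strictly increasing real sequence. Consider the value iteration V_0 ≡ 0 and V_{t+1}(b^j) = min{ b^j + V_t(b^(j+1)), b^j + W + ρ·V_t(b^1) + (1-ρ)·V_t(b^(j+1)) } − θ_t (for some constants θ_t, W ≥ 0). Then for every t, V_t is nondecreasing as a function of b^j, i.e., j ≤ i implies V_t(b^j) ≤ V_t(b^i). -/
import Mathlib


theorem stmt19 (ρ W : ℝ) (hρ : 0 < ρ) (hρ1 : ρ ≤ 1) (hW : 0 ≤ W)
    (b : ℕ → ℝ) (hb : ∀ j : ℕ, 1 ≤ j → b j < b (j + 1))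
    (θ : ℕ → ℝ) (V : ℕ → ℕ → ℝ)
    (hV0 : ∀ j, V 0 j = 0)
    (hVrec : ∀ t j, 1 ≤ j →
      V (t + 1) j =
        min (b j + V t (j + 1))
          (b j + W + ρ * V t 1 + (1 - ρ) * V t (j + 1)) - θ t) :
    ∀ t j i : ℕ, 1 ≤ j → j ≤ i → V t j ≤ V t i := by
  have hbmono : ∀ j i : ℕ, 1 ≤ j → j ≤ i → b j ≤ b i := by
    intro j i hj hji
    induction i with
    | zero => omega
    | succ n ih =>
      rcases Nat.lt_or_ge j (n + 1) with h | h
      · have hn : j ≤ n := by omega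
        exact (ih hn).trans (le_of_lt (hb n (by omega)))
      · have : j = n + 1 := by omega
        simp [this]
  intro t
  induction t with
  | zero => intro j i hj hji; simp [hV0]
  | succ t ih =>
    intro j i hj hji
    have hi : 1 ≤ i := hj.trans hji
    rw [hVrec t j hj, hVrec t i hi]
    have hVji : V t (j + 1) ≤ V t (i + 1) := ih (j + 1) (i + 1) (by omega) (by omega)
    have hbji := hbmono j i hj hji
    apply sub_le_sub_right
    apply min_le_min
    · linarith
    · nlinarith
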